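/- arXiv:1608.03654 — 2 statements merged into one kernel-verified Lean document; each statement's English description precedes it below -/
import Mathlib

section
/- Let k be a field and E ⊇ k a finite Galois extension with Galois group G = Gal(E/k). Then the canonical E-algebra homomorphism E ⊗_k E → ∏_{g ∈ G} E, determined on pure tensors by a ⊗ b ↦ (a · g(b))_{g ∈ G} (where E acts on E ⊗_k E through the left tensor factor), is an isomorphism of E-algebras. Equivalently, the composite of extension of scalars along k ⊆ E with restriction of scalars, applied to E itself, decomposes as a product indexed by G. -/
open scoped TensorProduct

/-- Let `k` be a field and `E ⊇ k` a finite Galois extension with Galois group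
`G = Gal(E/k) = (E ≃ₐ[k] E)`.  The canonical `E`-algebra homomorphism
`E ⊗[k] E → ∏_{g ∈ G} E` determined on pure tensors by `a ⊗ b ↦ (a * g b)_{g ∈ G}`
(where `E` acts on `E ⊗[k] E` through the left tensor factor) is an isomorphism,
i.e. bijective. -/
theorem galois_tensor_decomposition
    (k E : Type*) [Field k] [Field E] [Algebra k E]
    [FiniteDimensional k E] [IsGalois k E]
    (f : (E ⊗[k] E) →ₐ[E] ((E ≃ₐ[k] E) → E))
    (hf : ∀ a b : E, f (a ⊗ₜ[k] b) = fun g : E ≃ₐ[k] E => a * g b) :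
    Function.Bijective f := by
  classical
  -- Dedekind linear independence of characters, specialized to automorphisms
  have hind : LinearIndependent E (fun g : E ≃ₐ[k] E => ((g : E →* E) : E → E)) := by
    refine (linearIndependent_monoidHom E E).comp
      (fun g : E ≃ₐ[k] E => (g : E →* E)) ?_
    intro g₁ g₂ h
    ext x
    exact DFunLike.congr_fun h x
  -- surjectivity
  have hrange : LinearMap.range f.toLinearMap = ⊤ := by
    by_contra hne
    obtain ⟨φ, hφ0, hφ⟩ := Submodule.exists_dual_map_eq_bot_of_lt_top
      (p := LinearMap.range f.toLinearMap) (lt_top_iff_ne_top.mpr hne) inferInstance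
    have hvanish : ∀ x : E ⊗[k] E, φ (f x) = 0 := by
      intro x
      have : φ (f x) ∈ Submodule.map φ (LinearMap.range f.toLinearMap) :=
        Submodule.mem_map_of_mem ⟨x, rfl⟩
      rwa [hφ, Submodule.mem_bot] at this
    set c : (E ≃ₐ[k] E) → E := fun g => φ (Pi.single g 1) with hc
    have hφeq : ∀ v : (E ≃ₐ[k] E) → E, φ v = ∑ g, v g * c g := by
      intro v
      have hv : v = ∑ g, v g • (Pi.single g 1 : (E ≃ₐ[k] E) → E) := by
        funext g'
        simp [Pi.single_apply, Finset.sum_apply]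
      rw [hv]
      simp [c, Finset.sum_apply, smul_eq_mul, Pi.single_apply, mul_ite, mul_one,
        mul_zero, Finset.sum_ite_eq', mul_comm]
    have hczero : ∀ g, c g = 0 := by
      have := Fintype.linearIndependent_iff.mp hind c ?_
      · exact this
      · funext b
        have h1 : φ (f (1 ⊗ₜ[k] b)) = 0 := hvanish _
        rw [hf] at h1
        rw [hφeq] at h1
        simpa [Finset.sum_apply, mul_comm] using h1
    apply hφ0
    ext v
    simp [hφeq, hczero]
  have hsurj : Function.Surjective f :=
    LinearMap.range_eq_top.mp hrange
  have hdim : Module.finrank E (E ⊗[k] E) = Module.finrank E ((E ≃ₐ[k] E) → E) := by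
    rw [Module.finrank_baseChange, Module.finrank_pi, ← Nat.card_eq_fintype_card, IsGalois.card_aut_eq_finrank]
  have hinj : Function.Injective f.toLinearMap :=
    (LinearMap.injective_iff_surjective_of_finrank_eq_finrank hdim).mpr
      (LinearMap.range_eq_top.mp hrange)
  exact ⟨hinj, hsurj⟩
end

section
/- Let k be a field and E ⊇ k a finite Galois extension with Galois group G = Gal(E/k), and let Y be a finite-dimensional E-vector space. Then the k-linear map Y ⊗_k E → (G → Y) determined on pure tensors by y ⊗ b ↦ (g(b) • y)_{g ∈ G} is a k-linear bijection; moreover it is twisted-semilinear in the sense that for all y ∈ Y, b, c ∈ E and g ∈ G, the image of y ⊗ (b·c) at the coordinate g equals g(c) • (image of y ⊗ b at g). In other words, the composite functor Y ↦ Y ⊗_k E from E-vector spaces to E-vector spaces decomposes as the direct sum ⊕_{g ∈ G} g of the Galois twists of Y. -/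
open scoped TensorProduct

/-- Dedekind: independence of Galois automorphisms as functions. -/
lemma galois_mu_eq_zero (k E : Type*) [Field k] [Field E] [Algebra k E]
    [FiniteDimensional k E] [IsGalois k E]
    (μ : (E ≃ₐ[k] E) → E) (h : ∀ c : E, ∑ g : E ≃ₐ[k] E, μ g * g c = 0) : μ = 0 := by
  have hli : LinearIndependent E (fun g : E ≃ₐ[k] E => (g : E →ₐ[k] E).toLinearMap) :=
    (linearIndependent_algHom_toLinearMap k E E).comp _
      (fun g₁ g₂ h => by
        ext x; exact DFunLike.congr_fun h x)
  have := Fintype.linearIndependent_iff.mp hli μ ?_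
  · funext g; exact this g
  · ext c
    simpa using h c

lemma galois_span_top (k E : Type*) [Field k] [Field E] [Algebra k E]
    [FiniteDimensional k E] [IsGalois k E] :
    Submodule.span E {F : (E ≃ₐ[k] E) → E | ∃ c : E, F = fun g => g c} = ⊤ := by
  classical
  rw [eq_top_iff]
  intro v _
  rw [← Subspace.forall_mem_dualAnnihilator_apply_eq_zero_iff]
  intro φ hφ
  have key : ∀ F : (E ≃ₐ[k] E) → E, φ F = ∑ g : E ≃ₐ[k] E, F g * φ (Pi.single g 1) := by
    intro F
    have hF : F = ∑ g : E ≃ₐ[k] E, Pi.single g (F g) := by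
      funext x
      simp [Pi.single_apply, Finset.sum_ite_eq']
    conv_lhs => rw [hF]
    rw [map_sum]
    refine Finset.sum_congr rfl fun g _ => ?_
    have hsm : Pi.single g (F g) = F g • (Pi.single g 1 : (E ≃ₐ[k] E) → E) := by
      funext x
      simp only [Pi.single_apply, Pi.smul_apply, smul_eq_mul]
      split <;> simp
    rw [hsm, map_smul, smul_eq_mul]
  have hμ : (fun g : E ≃ₐ[k] E => φ (Pi.single g 1)) = 0 := by
    apply galois_mu_eq_zero k E
    intro c
    have := Submodule.mem_dualAnnihilator φ |>.mp hφ (fun g => g c)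
      (Submodule.subset_span ⟨c, rfl⟩)
    rw [key] at this
    simpa [mul_comm] using this
  rw [key]
  simp [funext_iff.mp hμ]

/-- Let `k` be a field, `E ⊇ k` a finite Galois extension with Galois group
`G = Gal(E/k) = (E ≃ₐ[k] E)`, and `Y` a finite-dimensional `E`-vector space.
The `k`-linear map `Y ⊗[k] E → (G → Y)` determined on pure tensors by
`y ⊗ b ↦ (g b • y)_{g ∈ G}` is a `k`-linear bijection, and it is
twisted-semilinear: the image of `y ⊗ (b * c)` at the coordinate `g` equals
`g c • (image of y ⊗ b at g)`.  In other words, base change to `E` of an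
`E`-vector space decomposes as the direct sum of its Galois twists. -/
theorem base_change_decomposes_into_galois_twists
    (k E : Type*) [Field k] [Field E] [Algebra k E]
    [FiniteDimensional k E] [IsGalois k E]
    (Y : Type*) [AddCommGroup Y] [Module E Y] [Module k Y]
    [IsScalarTower k E Y] [FiniteDimensional E Y]
    (f : (Y ⊗[k] E) →ₗ[k] ((E ≃ₐ[k] E) → Y))
    (hf : ∀ (y : Y) (b : E), f (y ⊗ₜ[k] b) = fun g : E ≃ₐ[k] E => g b • y) :
    Function.Bijective f ∧
      ∀ (y : Y) (b c : E) (g : E ≃ₐ[k] E),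
        f (y ⊗ₜ[k] (b * c)) g = g c • f (y ⊗ₜ[k] b) g := by
  classical
  constructor
  · -- surjectivity first
    have hsurj : Function.Surjective f := by
      have hsingle : ∀ (g₀ : E ≃ₐ[k] E) (y : Y), Pi.single g₀ y ∈ LinearMap.range f := by
        intro g₀ y
        have h1 : (Pi.single g₀ 1 : (E ≃ₐ[k] E) → E) ∈
            Submodule.span E {F : (E ≃ₐ[k] E) → E | ∃ c : E, F = fun g => g c} := by
          rw [galois_span_top k E]; trivial
        obtain ⟨n, a, c, hc⟩ := (Submodule.mem_span_set' (R := E)).mp h1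
        choose c' hc' using fun i => (c i).2
        refine ⟨∑ i, (a i • y) ⊗ₜ[k] (c' i), ?_⟩
        rw [map_sum]
        funext g
        have h2 := congrFun hc g
        simp only [Finset.sum_apply, Pi.smul_apply, smul_eq_mul] at h2
        simp only [Finset.sum_apply, hf]
        have h3 : ((Pi.single g₀ 1 : (E ≃ₐ[k] E) → E) g) • y = (Pi.single g₀ y : (E ≃ₐ[k] E) → Y) g := by
          rcases eq_or_ne g g₀ with h | h
          · subst h; simp
          · simp [Pi.single_apply, h]
        calc ∑ i, g (c' i) • (a i • y)
            = ∑ i, (a i * (c i : (E ≃ₐ[k] E) → E) g) • y := by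
              refine Finset.sum_congr rfl fun i _ => ?_
              rw [congrFun (hc' i) g, smul_smul, mul_comm]
          _ = (∑ i, a i * (c i : (E ≃ₐ[k] E) → E) g) • y := by rw [Finset.sum_smul]
          _ = ((Pi.single g₀ 1 : (E ≃ₐ[k] E) → E) g) • y := by rw [h2]
          _ = (Pi.single g₀ y : (E ≃ₐ[k] E) → Y) g := h3
      intro F
      have hmem : F ∈ LinearMap.range f := by
        have hFeq : F = ∑ g : E ≃ₐ[k] E, Pi.single g (F g) := by
          funext x; simp [Pi.single_apply, Finset.sum_ite_eq']
        rw [hFeq]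
        exact Submodule.sum_mem _ fun g _ => hsingle g (F g)
      exact hmem
    have hinj : Function.Injective f := by
      have : FiniteDimensional k Y := FiniteDimensional.trans k E Y
      refine (LinearMap.injective_iff_surjective_of_finrank_eq_finrank ?_).mpr hsurj
      rw [Module.finrank_tensorProduct, Module.finrank_pi_fintype, Finset.sum_const,
        Finset.card_univ, ← Nat.card_eq_fintype_card, IsGalois.card_aut_eq_finrank, smul_eq_mul, mul_comm]
    exact ⟨hinj, hsurj⟩
  · intro y b c g
    rw [hf, hf]
    show g (b * c) • y = g c • (g b • y)
    rw [map_mul, mul_smul, smul_comm]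
end
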